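/- Let φ be a Bernstein function that is not identically constant, with φ(∞) = lim_{x→∞} φ(x) possibly infinite. Then for every A > 0, lim_{x→∞} sup_{0 ≤ v ≤ A, y ∈ ℝ} |φ(x + v + iy)/φ(x + iy)| = 1. -/

import Mathlib

open MeasureTheory Set Filter


lemma integ_real' {μ : Measure ℝ}
    (hint : ∀ z : ℂ, 0 < z.re →
      IntegrableOn (fun y : ℝ => 1 - Complex.exp (-(z * (y : ℂ)))) (Set.Ioi 0) μ)
    {x : ℝ} (hx : 0 < x) :
    IntegrableOn (fun y : ℝ => 1 - Real.exp (-(x*y))) (Set.Ioi 0) μ := by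
  have h := (hint (x:ℂ) (by simpa using hx)).re
  refine h.congr (Filter.Eventually.of_forall fun y => ?_)
  have h1 : -((x:ℂ) * (y:ℂ)) = ((-(x*y) : ℝ) : ℂ) := by push_cast; ring
  simp only []
  rw [h1, ← Complex.ofReal_exp]
  simp [-Complex.ofReal_exp]

lemma integ_prod' {μ : Measure ℝ}
    (hint : ∀ z : ℂ, 0 < z.re →
      IntegrableOn (fun y : ℝ => 1 - Complex.exp (-(z * (y : ℂ)))) (Set.Ioi 0) μ)
    {x v : ℝ} (hx : 0 < x) (hv : 0 ≤ v) :
    IntegrableOn (fun y : ℝ => Real.exp (-(x*y)) * (1 - Real.exp (-(v*y)))) (Set.Ioi 0) μ := by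
  have h := (integ_real' hint (by linarith : (0:ℝ) < x + v)).sub (integ_real' hint hx)
  refine h.congr (Filter.Eventually.of_forall fun y => ?_)
  simp only [Pi.sub_apply]
  rw [show -((x+v)*y) = -(x*y) + -(v*y) by ring, Real.exp_add]
  ring

lemma integ_nonneg' {μ : Measure ℝ} {x : ℝ} (hx : 0 ≤ x) :
    0 ≤ ∫ y in Set.Ioi (0:ℝ), (1 - Real.exp (-(x*y))) ∂μ := by
  refine setIntegral_nonneg measurableSet_Ioi fun y hy => ?_
  have : -(x*y) ≤ 0 := by nlinarith [le_of_lt (show (0:ℝ) < y from hy)]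
  have := Real.exp_le_one_iff.mpr this  -- check name
  linarith



lemma integ_mono {μ : Measure ℝ}
    (hint : ∀ z : ℂ, 0 < z.re →
      IntegrableOn (fun y : ℝ => 1 - Complex.exp (-(z * (y : ℂ)))) (Set.Ioi 0) μ)
    {x : ℝ} (hx : 1 ≤ x) :
    ∫ y in Set.Ioi (0:ℝ), (1 - Real.exp (-(1*y))) ∂μ
      ≤ ∫ y in Set.Ioi (0:ℝ), (1 - Real.exp (-(x*y))) ∂μ := by
  refine setIntegral_mono_on (integ_real' hint one_pos) (integ_real' hint (by linarith))
    measurableSet_Ioi fun y hy => ?_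
  have hy0 : (0:ℝ) < y := hy
  have : -(x*y) ≤ -(1*y) := by nlinarith
  have := Real.exp_le_exp.mpr this
  linarith

-- Re bound
lemma re_bound {q d : ℝ} {μ : Measure ℝ} (φ : ℂ → ℂ)
    (hφ : ∀ z : ℂ, 0 < z.re →
      φ z = (q : ℂ) + (d : ℂ) * z
        + ∫ y in Set.Ioi (0:ℝ), (1 - Complex.exp (-(z * (y : ℂ)))) ∂μ)
    (hint : ∀ z : ℂ, 0 < z.re →
      IntegrableOn (fun y : ℝ => 1 - Complex.exp (-(z * (y : ℂ)))) (Set.Ioi 0) μ)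
    {z : ℂ} (hz : 0 < z.re) :
    q + d * z.re + ∫ y in Set.Ioi (0:ℝ), (1 - Real.exp (-(z.re*y))) ∂μ ≤ (φ z).re := by
  rw [hφ z hz]
  have hre : (∫ y in Set.Ioi (0:ℝ), (1 - Complex.exp (-(z * (y : ℂ)))) ∂μ).re
      = ∫ y in Set.Ioi (0:ℝ), (1 - Complex.exp (-(z * (y : ℂ)))).re ∂μ := by
    have h := (integral_re (hint z hz)).symm
    simpa [RCLike.re_to_complex] using h
  simp only [Complex.add_re, Complex.ofReal_re, Complex.mul_re, Complex.ofReal_im]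
  rw [hre]
  have hmono : ∫ y in Set.Ioi (0:ℝ), (1 - Real.exp (-(z.re*y))) ∂μ
      ≤ ∫ y in Set.Ioi (0:ℝ), (1 - Complex.exp (-(z * (y : ℂ)))).re ∂μ := by
    refine setIntegral_mono_on (integ_real' hint hz) ((hint z hz).re) measurableSet_Ioi
      fun y hy => ?_
    have h1 : (Complex.exp (-(z * (y:ℂ)))).re ≤ Real.exp (-(z.re * y)) := by
      calc (Complex.exp (-(z * (y:ℂ)))).re ≤ ‖Complex.exp (-(z * (y:ℂ)))‖ :=
        Complex.re_le_norm _
      _ = Real.exp ((-(z * (y:ℂ))).re) := Complex.norm_exp _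
      _ = Real.exp (-(z.re * y)) := by simp
    simp only [Complex.sub_re, Complex.one_re]
    linarith
  nlinarith [hmono]


-- positivity of psi(1)
lemma psi_one_pos {q d : ℝ} {μ : Measure ℝ} (hq : 0 ≤ q) (hd : 0 ≤ d)
    (hnc : 0 < d ∨ 0 < μ (Set.Ioi (0:ℝ)))
    (hint : ∀ z : ℂ, 0 < z.re →
      IntegrableOn (fun y : ℝ => 1 - Complex.exp (-(z * (y : ℂ)))) (Set.Ioi 0) μ) :
    0 < q + d * 1 + ∫ y in Set.Ioi (0:ℝ), (1 - Real.exp (-(1*y))) ∂μ := by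
  have hI0 : 0 ≤ ∫ y in Set.Ioi (0:ℝ), (1 - Real.exp (-(1*y))) ∂μ := by
    refine setIntegral_nonneg measurableSet_Ioi fun y hy => ?_
    have : -(1*y) ≤ 0 := by nlinarith [le_of_lt (show (0:ℝ) < y from hy)]
    have := Real.exp_le_one_iff.mpr this
    linarith
  rcases hnc with hd' | hμ'
  · nlinarith
  · have hpos : 0 < ∫ y in Set.Ioi (0:ℝ), (1 - Real.exp (-(1*y))) ∂μ := by
      rw [setIntegral_pos_iff_support_of_nonneg_ae]
      · refine lt_of_lt_of_le hμ' (measure_mono ?_)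
        intro y hy
        refine ⟨?_, hy⟩
        have hy0 : (0:ℝ) < y := hy
        simp only [Function.mem_support]
        have : Real.exp (-(1*y)) < 1 := by
          rw [Real.exp_lt_one_iff]; linarith
        intro hcon
        · nlinarith [hcon]
      · refine (ae_restrict_iff' measurableSet_Ioi).mpr (Filter.Eventually.of_forall fun y hy => ?_)
        have hy0 : (0:ℝ) < y := hy
        have : -(1*y) ≤ 0 := by nlinarith
        have := Real.exp_le_one_iff.mpr this
        simp only [Pi.zero_apply]; linarith
      · exact integ_real' hint one_pos
    nlinarith

lemma diff_bound {q d : ℝ} {μ : Measure ℝ} (φ : ℂ → ℂ)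
    (hd : 0 ≤ d)
    (hφ : ∀ z : ℂ, 0 < z.re →
      φ z = (q : ℂ) + (d : ℂ) * z
        + ∫ y in Set.Ioi (0:ℝ), (1 - Complex.exp (-(z * (y : ℂ)))) ∂μ)
    (hint : ∀ z : ℂ, 0 < z.re →
      IntegrableOn (fun y : ℝ => 1 - Complex.exp (-(z * (y : ℂ)))) (Set.Ioi 0) μ)
    {z : ℂ} (hz : 0 < z.re) {v : ℝ} (hv : 0 ≤ v) :
    ‖φ (z + (v:ℂ)) - φ z‖
      ≤ d*v + ∫ y in Set.Ioi (0:ℝ), Real.exp (-(z.re*y)) * (1 - Real.exp (-(v*y))) ∂μ := by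
  have hz2 : 0 < (z + (v:ℂ)).re := by simp; linarith
  have hJ : φ (z + (v:ℂ)) - φ z = (d:ℂ)*(v:ℂ)
      + ∫ y in Set.Ioi (0:ℝ),
          Complex.exp (-(z * (y:ℂ))) * (1 - Complex.exp (-((v:ℂ) * (y:ℂ)))) ∂μ := by
    rw [hφ _ hz2, hφ z hz]
    have hsub : (∫ y in Set.Ioi (0:ℝ), (1 - Complex.exp (-((z+(v:ℂ)) * (y : ℂ)))) ∂μ)
        - (∫ y in Set.Ioi (0:ℝ), (1 - Complex.exp (-(z * (y : ℂ)))) ∂μ)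
        = ∫ y in Set.Ioi (0:ℝ),
            Complex.exp (-(z * (y:ℂ))) * (1 - Complex.exp (-((v:ℂ) * (y:ℂ)))) ∂μ := by
      rw [← integral_sub (hint _ hz2) (hint z hz)]
      refine setIntegral_congr_fun measurableSet_Ioi fun y _ => ?_
      rw [show -((z+(v:ℂ))*(y:ℂ)) = -(z*(y:ℂ)) + -((v:ℂ)*(y:ℂ)) by ring, Complex.exp_add]
      ring
    rw [← hsub]
    ring
  rw [hJ]
  have habs : ‖(d:ℂ)*(v:ℂ)‖ = d*v := by
    simp [Complex.norm_real, abs_of_nonneg hd, abs_of_nonneg hv, norm_mul]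
  calc ‖(d:ℂ)*(v:ℂ) + _‖ ≤ ‖(d:ℂ)*(v:ℂ)‖ + ‖_‖ :=
        norm_add_le _ _
  _ ≤ d*v + ∫ y in Set.Ioi (0:ℝ), Real.exp (-(z.re*y)) * (1 - Real.exp (-(v*y))) ∂μ := by
      rw [habs]
      gcongr
      calc ‖∫ y in Set.Ioi (0:ℝ),
              Complex.exp (-(z * (y:ℂ))) * (1 - Complex.exp (-((v:ℂ) * (y:ℂ)))) ∂μ‖
          ≤ ∫ y in Set.Ioi (0:ℝ),
              ‖Complex.exp (-(z * (y:ℂ))) * (1 - Complex.exp (-((v:ℂ) * (y:ℂ))))‖ ∂μ :=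
            by
              have := norm_integral_le_integral_norm
                (fun y : ℝ => Complex.exp (-(z * (y:ℂ))) * (1 - Complex.exp (-((v:ℂ) * (y:ℂ)))))
                (μ := μ.restrict (Set.Ioi 0))
              exact this
      _ = ∫ y in Set.Ioi (0:ℝ), Real.exp (-(z.re*y)) * (1 - Real.exp (-(v*y))) ∂μ := by
          refine setIntegral_congr_fun measurableSet_Ioi fun y hy => ?_
          have hy0 : (0:ℝ) < y := hy
          have h1 : -((v:ℂ) * (y:ℂ)) = ((-(v*y) : ℝ) : ℂ) := by push_cast; ring
          rw [norm_mul, Complex.norm_exp, h1, ← Complex.ofReal_exp,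
            show (1:ℂ) - ((Real.exp (-(v*y)) : ℝ) : ℂ) = ((1 - Real.exp (-(v*y)) : ℝ) : ℂ) by
              push_cast; ring,
            Complex.norm_real, Real.norm_eq_abs]
          have hle : Real.exp (-(v*y)) ≤ 1 := Real.exp_le_one_iff.mpr (by nlinarith)
          rw [abs_of_nonneg (by linarith)]
          congr 1
          simp [Complex.mul_re]


lemma key_bound {q d : ℝ} {μ : Measure ℝ} (φ : ℂ → ℂ) (hq : 0 ≤ q) (hd : 0 ≤ d)
    (hnc : 0 < d ∨ 0 < μ (Set.Ioi (0:ℝ)))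
    (hφ : ∀ z : ℂ, 0 < z.re →
      φ z = (q : ℂ) + (d : ℂ) * z
        + ∫ y in Set.Ioi (0:ℝ), (1 - Complex.exp (-(z * (y : ℂ)))) ∂μ)
    (hint : ∀ z : ℂ, 0 < z.re →
      IntegrableOn (fun y : ℝ => 1 - Complex.exp (-(z * (y : ℂ)))) (Set.Ioi 0) μ)
    {A x v : ℝ} (hA : 0 < A) (hx : 1 ≤ x) (hv : v ∈ Set.Icc 0 A) (y : ℝ) :
    ‖φ ((x : ℂ) + (v : ℂ) + (y : ℂ) * Complex.I)
        / φ ((x : ℂ) + (y : ℂ) * Complex.I)‖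
      ≤ 1 + A/x
        + (∫ y in Set.Ioi (0:ℝ), Real.exp (-(x*y)) * (1 - Real.exp (-(A*y))) ∂μ)
          / (q + d * 1 + ∫ y in Set.Ioi (0:ℝ), (1 - Real.exp (-(1*y))) ∂μ) := by
  have hx0 : (0:ℝ) < x := by linarith
  set z : ℂ := (x : ℂ) + (y : ℂ) * Complex.I with hzdef
  have hzre : z.re = x := by simp [hzdef]
  have hz : 0 < z.re := by rw [hzre]; exact hx0
  set c : ℝ := q + d * 1 + ∫ y in Set.Ioi (0:ℝ), (1 - Real.exp (-(1*y))) ∂μ with hcdef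
  set ψ : ℝ := q + d * x + ∫ y in Set.Ioi (0:ℝ), (1 - Real.exp (-(x*y))) ∂μ with hψdef
  set D : ℝ := ∫ y in Set.Ioi (0:ℝ), Real.exp (-(x*y)) * (1 - Real.exp (-(A*y))) ∂μ with hDdef
  set Dv : ℝ := ∫ y in Set.Ioi (0:ℝ), Real.exp (-(x*y)) * (1 - Real.exp (-(v*y))) ∂μ with hDvdef
  have hc : 0 < c := psi_one_pos hq hd hnc hint
  have hcψ : c ≤ ψ := by
    have h1 := integ_mono hint hx
    have h2 : d * 1 ≤ d * x := by nlinarith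
    rw [hcdef, hψdef]; linarith
  have hψpos : 0 < ψ := lt_of_lt_of_le hc hcψ
  have hψle : ψ ≤ ‖φ z‖ := by
    have h1 := re_bound φ hφ hint hz
    rw [hzre] at h1
    exact le_trans (by rw [hψdef]; exact h1) (Complex.re_le_norm _)
  have haφ : 0 < ‖φ z‖ := lt_of_lt_of_le hψpos hψle
  have hne : φ z ≠ 0 := by
    intro h; rw [h] at haφ; simp at haφ
  have hzv : (x : ℂ) + (v : ℂ) + (y : ℂ) * Complex.I = z + (v:ℂ) := by rw [hzdef]; ring
  have hdiff := diff_bound φ hd hφ hint hz hv.1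
  rw [hzre] at hdiff
  have hDv0 : 0 ≤ Dv := by
    refine setIntegral_nonneg measurableSet_Ioi fun y' hy' => ?_
    have hy0 : (0:ℝ) < y' := hy'
    have h1 := Real.exp_le_one_iff.mpr (show -(v*y') ≤ 0 by nlinarith [hv.1])
    nlinarith [(Real.exp_pos (-(x*y'))).le]
  have hD0 : 0 ≤ D := by
    refine setIntegral_nonneg measurableSet_Ioi fun y' hy' => ?_
    have hy0 : (0:ℝ) < y' := hy'
    have h1 := Real.exp_le_one_iff.mpr (show -(A*y') ≤ 0 by nlinarith)
    nlinarith [(Real.exp_pos (-(x*y'))).le]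
  have hDvD : Dv ≤ D := by
    refine setIntegral_mono_on (integ_prod' hint hx0 hv.1) (integ_prod' hint hx0 hA.le)
      measurableSet_Ioi fun y' hy' => ?_
    have hy0 : (0:ℝ) < y' := hy'
    have : Real.exp (-(A*y')) ≤ Real.exp (-(v*y')) := by
      apply Real.exp_le_exp.mpr; nlinarith [hv.2]
    have hexp := Real.exp_pos (-(x*y'))
    nlinarith
  have htri : ‖φ (z + (v:ℂ))‖ ≤ ‖φ z‖ + (d*v + Dv) := by
    calc ‖φ (z + (v:ℂ))‖
        = ‖φ z + (φ (z + (v:ℂ)) - φ z)‖ := by ring_nf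
    _ ≤ ‖φ z‖ + ‖φ (z + (v:ℂ)) - φ z‖ := norm_add_le _ _
    _ ≤ ‖φ z‖ + (d*v + Dv) := by exact add_le_add_right hdiff _
  rw [hzv, norm_div]
  have hstep : ‖φ (z + (v:ℂ))‖ / ‖φ z‖
      ≤ 1 + (d*v) / ‖φ z‖ + Dv / ‖φ z‖ := by
    rw [show (1:ℝ) + (d*v) / ‖φ z‖ + Dv / ‖φ z‖
        = (‖φ z‖ + (d*v + Dv)) / ‖φ z‖ by field_simp; ring]
    exact (div_le_div_iff_of_pos_right haφ).mpr htri
  refine le_trans hstep ?_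
  have h1 : (d*v) / ‖φ z‖ ≤ A / x := by
    rcases eq_or_lt_of_le hd with h | h
    · rw [← h]; simp; positivity
    · have hdx : 0 < d * x := by positivity
      have hdxle : d * x ≤ ‖φ z‖ := by
        have hI := integ_nonneg' (μ := μ) hx0.le
        have : d * x ≤ ψ := by rw [hψdef]; linarith
        linarith
      calc (d*v) / ‖φ z‖ ≤ (d*A) / (d*x) :=
            div_le_div₀ (by positivity) (by nlinarith [hv.2]) hdx hdxle
      _ = A / x := by rw [mul_div_mul_left _ _ (ne_of_gt h)]
  have h2 : Dv / ‖φ z‖ ≤ D / c := by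
    have : c ≤ ‖φ z‖ := le_trans hcψ hψle
    exact div_le_div₀ hD0 hDvD hc this
  linarith

lemma D_tendsto {μ : Measure ℝ}
    (hint : ∀ z : ℂ, 0 < z.re →
      IntegrableOn (fun y : ℝ => 1 - Complex.exp (-(z * (y : ℂ)))) (Set.Ioi 0) μ)
    {A : ℝ} (hA : 0 < A) :
    Tendsto (fun x : ℝ => ∫ y in Set.Ioi (0:ℝ),
        Real.exp (-(x*y)) * (1 - Real.exp (-(A*y))) ∂μ) atTop (nhds 0) := by
  have h := tendsto_integral_filter_of_dominated_convergence
    (μ := μ.restrict (Set.Ioi 0)) (l := atTop) (f := fun _ : ℝ => (0:ℝ))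
    (F := fun x : ℝ => fun y : ℝ => Real.exp (-(x*y)) * (1 - Real.exp (-(A*y))))
    (fun y : ℝ => 1 - Real.exp (-(A*y)))
    (Filter.Eventually.of_forall fun x =>
      (Continuous.aestronglyMeasurable (by fun_prop)))
    ?_ (integ_real' hint hA) ?_
  · simpa using h
  · filter_upwards [Filter.eventually_ge_atTop (0:ℝ)] with x hx
    refine (ae_restrict_iff' measurableSet_Ioi).mpr (Filter.Eventually.of_forall fun y hy => ?_)
    have hy0 : (0:ℝ) < y := hy
    have h1 : Real.exp (-(x*y)) ≤ 1 := Real.exp_le_one_iff.mpr (by nlinarith)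
    have h2 : Real.exp (-(A*y)) ≤ 1 := Real.exp_le_one_iff.mpr (by nlinarith)
    have h3 := (Real.exp_pos (-(x*y))).le
    have h4 := (Real.exp_pos (-(A*y))).le
    rw [Real.norm_eq_abs, abs_of_nonneg (by nlinarith)]
    nlinarith
  · refine (ae_restrict_iff' measurableSet_Ioi).mpr (Filter.Eventually.of_forall fun y hy => ?_)
    have hy0 : (0:ℝ) < y := hy
    have h1 : Tendsto (fun x : ℝ => -(x*y)) atTop atBot :=
      tendsto_neg_atBot_iff.mpr (Tendsto.atTop_mul_const hy0 tendsto_id)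
    have h2 : Tendsto (fun x : ℝ => Real.exp (-(x*y))) atTop (nhds 0) :=
      Real.tendsto_exp_atBot.comp h1
    have h3 := h2.mul_const (1 - Real.exp (-(A*y)))
    simpa using h3

lemma phi_abs_pos {q d : ℝ} {μ : Measure ℝ} (φ : ℂ → ℂ) (hq : 0 ≤ q) (hd : 0 ≤ d)
    (hnc : 0 < d ∨ 0 < μ (Set.Ioi (0:ℝ)))
    (hφ : ∀ z : ℂ, 0 < z.re →
      φ z = (q : ℂ) + (d : ℂ) * z
        + ∫ y in Set.Ioi (0:ℝ), (1 - Complex.exp (-(z * (y : ℂ)))) ∂μ)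
    (hint : ∀ z : ℂ, 0 < z.re →
      IntegrableOn (fun y : ℝ => 1 - Complex.exp (-(z * (y : ℂ)))) (Set.Ioi 0) μ)
    {x : ℝ} (hx : 1 ≤ x) (y : ℝ) :
    0 < ‖φ ((x : ℂ) + (y : ℂ) * Complex.I)‖ := by
  set z : ℂ := (x : ℂ) + (y : ℂ) * Complex.I with hzdef
  have hzre : z.re = x := by simp [hzdef]
  have hz : 0 < z.re := by rw [hzre]; linarith
  have h1 := re_bound φ hφ hint hz
  rw [hzre] at h1
  have hc := psi_one_pos hq hd hnc hint
  have hmono := integ_mono hint hx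
  have h2 : d * 1 ≤ d * x := by nlinarith
  have h3 := Complex.re_le_norm (φ z)
  linarith

theorem bernstein_ratio_sup_tendsto_one
    (q d : ℝ) (hq : 0 ≤ q) (hd : 0 ≤ d)
    (μ : Measure ℝ)
    (hμ : ∫⁻ y in Set.Ioi (0:ℝ), ENNReal.ofReal (min y 1) ∂μ < ⊤)
    (hnc : 0 < d ∨ 0 < μ (Set.Ioi (0:ℝ)))
    (φ : ℂ → ℂ)
    (hφ : ∀ z : ℂ, 0 < z.re →
      φ z = (q : ℂ) + (d : ℂ) * z
        + ∫ y in Set.Ioi (0:ℝ), (1 - Complex.exp (-(z * (y : ℂ)))) ∂μ)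
    (hint : ∀ z : ℂ, 0 < z.re →
      IntegrableOn (fun y : ℝ => 1 - Complex.exp (-(z * (y : ℂ)))) (Set.Ioi 0) μ) :
    ∀ A : ℝ, 0 < A →
      Tendsto
        (fun x : ℝ =>
          ⨆ v ∈ Set.Icc (0:ℝ) A, ⨆ y : ℝ,
            ‖φ ((x : ℂ) + (v : ℂ) + (y : ℂ) * Complex.I)
              / φ ((x : ℂ) + (y : ℂ) * Complex.I)‖)
        atTop (nhds 1) := by
  intro A hA
  set c : ℝ := q + d * 1 + ∫ y in Set.Ioi (0:ℝ), (1 - Real.exp (-(1*y))) ∂μ with hcdef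
  have hc0 : 0 < c := psi_one_pos hq hd hnc hint
  set B : ℝ → ℝ := fun x =>
    1 + A/x + (∫ y in Set.Ioi (0:ℝ), Real.exp (-(x*y)) * (1 - Real.exp (-(A*y))) ∂μ) / c
    with hBdef
  set f : ℝ → ℝ → ℝ → ℝ := fun x v y =>
    ‖φ ((x : ℂ) + (v : ℂ) + (y : ℂ) * Complex.I)
      / φ ((x : ℂ) + (y : ℂ) * Complex.I)‖ with hfdef
  have hBlim : Tendsto B atTop (nhds 1) := by
    have h1 : Tendsto (fun x : ℝ => A/x) atTop (nhds 0) :=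
      tendsto_const_nhds.div_atTop tendsto_id
    have h2 := (D_tendsto hint hA).div_const c
    have h3 := ((tendsto_const_nhds (x := (1:ℝ)) (f := atTop)).add h1).add h2
    simpa using h3
  -- pointwise bound
  have hkey : ∀ x : ℝ, 1 ≤ x → ∀ v ∈ Set.Icc (0:ℝ) A, ∀ y : ℝ, f x v y ≤ B x :=
    fun x hx v hv y => key_bound φ hq hd hnc hφ hint hA hx hv y
  have hB0 : ∀ x : ℝ, 1 ≤ x → 0 ≤ B x := by
    intro x hx
    have hx0 : (0:ℝ) < x := by linarith
    have hD0 : 0 ≤ ∫ y in Set.Ioi (0:ℝ), Real.exp (-(x*y)) * (1 - Real.exp (-(A*y))) ∂μ := by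
      refine setIntegral_nonneg measurableSet_Ioi fun y' hy' => ?_
      have hy0 : (0:ℝ) < y' := hy'
      have h1 := Real.exp_le_one_iff.mpr (show -(A*y') ≤ 0 by nlinarith)
      nlinarith [(Real.exp_pos (-(x*y'))).le]
    have : 0 ≤ A/x := by positivity
    have : 0 ≤ (∫ y in Set.Ioi (0:ℝ), Real.exp (-(x*y)) * (1 - Real.exp (-(A*y))) ∂μ) / c := by
      positivity
    simp only [hBdef]
    linarith
  refine tendsto_of_tendsto_of_tendsto_of_le_of_le' (tendsto_const_nhds) hBlim ?_ ?_
  · -- lower bound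
    filter_upwards [Filter.eventually_ge_atTop (1:ℝ)] with x hx
    have hbB := hB0 x hx
    have hmem0 : (0:ℝ) ∈ Set.Icc (0:ℝ) A := ⟨le_refl _, hA.le⟩
    have h00 : f x 0 0 = 1 := by
      have he : (x:ℂ) + ((0:ℝ):ℂ) + ((0:ℝ):ℂ) * Complex.I = (x:ℂ) + ((0:ℝ):ℂ) * Complex.I := by
        push_cast; ring
      have hne : φ ((x:ℂ) + ((0:ℝ):ℂ) * Complex.I) ≠ 0 := by
        have := phi_abs_pos φ hq hd hnc hφ hint hx (0:ℝ)
        intro hcon; rw [hcon] at this; simp at this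
      simp only [hfdef, he, div_self hne, norm_one]
    have hbdd1 : BddAbove (Set.range (fun y => f x 0 y)) := by
      refine ⟨B x, ?_⟩
      rintro _ ⟨y, rfl⟩
      exact hkey x hx 0 hmem0 y
    have h1 : 1 ≤ ⨆ y : ℝ, f x 0 y := le_ciSup_of_le hbdd1 0 (le_of_eq h00.symm)
    have h2 : (⨆ (_ : (0:ℝ) ∈ Set.Icc (0:ℝ) A), ⨆ y : ℝ, f x 0 y) = ⨆ y : ℝ, f x 0 y :=
      ciSup_pos hmem0
    have hbdd2 : BddAbove (Set.range (fun v : ℝ =>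
        ⨆ (_ : v ∈ Set.Icc (0:ℝ) A), ⨆ y : ℝ, f x v y)) := by
      refine ⟨B x, ?_⟩
      rintro _ ⟨v, rfl⟩
      exact Real.iSup_le (fun hv => Real.iSup_le (fun y => hkey x hx v hv y) hbB) hbB
    calc (1:ℝ) ≤ ⨆ y : ℝ, f x 0 y := h1
    _ = ⨆ (_ : (0:ℝ) ∈ Set.Icc (0:ℝ) A), ⨆ y : ℝ, f x 0 y := h2.symm
    _ ≤ ⨆ v ∈ Set.Icc (0:ℝ) A, ⨆ y : ℝ, f x v y := le_ciSup hbdd2 0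
  · -- upper bound
    filter_upwards [Filter.eventually_ge_atTop (1:ℝ)] with x hx
    have hbB := hB0 x hx
    exact Real.iSup_le
      (fun v => Real.iSup_le (fun hv => Real.iSup_le (fun y => hkey x hx v hv y) hbB) hbB) hbB
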